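/- Fix h > 0 and, for sufficiently small ε > 0, let (α₋₂(ε), α₋₁(ε), α₀(ε), β₋₁(ε), γ(ε)) denote the unique solution of the 5×5 collocation system M(ε)·w = b(ε) of the sixth-order Gaussian RBF-HFD formula for the first derivative. Then (α₋₂(ε) + 1/(36h))/ε² → −h/9 as ε → 0⁺. -/

import Mathlib

open Filter Topology Matrix

/-- Collocation matrix of the sixth-order Gaussian RBF-HFD formula for the
first derivative on the uniform five-point stencil. -/
noncomputable def hfd6Matrix (h ε : ℝ) : Matrix (Fin 5) (Fin 5) ℝ :=
  !![1 - Real.exp (-16 * ε ^ 2 * h ^ 2),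
     Real.exp (-ε ^ 2 * h ^ 2) - Real.exp (-9 * ε ^ 2 * h ^ 2),
     Real.exp (-4 * ε ^ 2 * h ^ 2),
     -2 * h * ε ^ 2 * Real.exp (-ε ^ 2 * h ^ 2) -
       6 * h * ε ^ 2 * Real.exp (-9 * ε ^ 2 * h ^ 2), 1;
     Real.exp (-ε ^ 2 * h ^ 2) - Real.exp (-9 * ε ^ 2 * h ^ 2),
     1 - Real.exp (-4 * ε ^ 2 * h ^ 2),
     Real.exp (-ε ^ 2 * h ^ 2),
     -4 * h * ε ^ 2 * Real.exp (-4 * ε ^ 2 * h ^ 2), 1;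
     0, 0, 1, 0, 1;
     -2 * h * ε ^ 2 * Real.exp (-ε ^ 2 * h ^ 2) -
       6 * h * ε ^ 2 * Real.exp (-9 * ε ^ 2 * h ^ 2),
     -4 * h * ε ^ 2 * Real.exp (-4 * ε ^ 2 * h ^ 2),
     2 * h * ε ^ 2 * Real.exp (-ε ^ 2 * h ^ 2),
     2 * ε ^ 2 + Real.exp (-4 * ε ^ 2 * h ^ 2) * (2 * ε ^ 2 - 16 * ε ^ 4 * h ^ 2), 0;
     0, 0, 1, 0, 0]

/-- Right-hand side of the collocation system of the sixth-order Gaussian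
RBF-HFD formula for the first derivative. -/
noncomputable def hfd6Rhs (h ε : ℝ) : Fin 5 → ℝ :=
  ![-4 * h * ε ^ 2 * Real.exp (-4 * ε ^ 2 * h ^ 2),
    -2 * h * ε ^ 2 * Real.exp (-ε ^ 2 * h ^ 2),
    0,
    Real.exp (-ε ^ 2 * h ^ 2) * (2 * ε ^ 2 - 4 * ε ^ 4 * h ^ 2),
    0]


set_option maxHeartbeats 2000000 in
lemma det_fin_five (A : Matrix (Fin 5) (Fin 5) ℝ) :
    det A =
    (A 0 0*A 1 1*A 2 2*A 3 3*A 4 4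
    - A 0 0*A 1 1*A 2 2*A 3 4*A 4 3
    - A 0 0*A 1 1*A 2 3*A 3 2*A 4 4
    + A 0 0*A 1 1*A 2 3*A 3 4*A 4 2
    + A 0 0*A 1 1*A 2 4*A 3 2*A 4 3
    - A 0 0*A 1 1*A 2 4*A 3 3*A 4 2
    - A 0 0*A 1 2*A 2 1*A 3 3*A 4 4
    + A 0 0*A 1 2*A 2 1*A 3 4*A 4 3
    + A 0 0*A 1 2*A 2 3*A 3 1*A 4 4
    - A 0 0*A 1 2*A 2 3*A 3 4*A 4 1
    - A 0 0*A 1 2*A 2 4*A 3 1*A 4 3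
    + A 0 0*A 1 2*A 2 4*A 3 3*A 4 1
    + A 0 0*A 1 3*A 2 1*A 3 2*A 4 4
    - A 0 0*A 1 3*A 2 1*A 3 4*A 4 2
    - A 0 0*A 1 3*A 2 2*A 3 1*A 4 4
    + A 0 0*A 1 3*A 2 2*A 3 4*A 4 1
    + A 0 0*A 1 3*A 2 4*A 3 1*A 4 2
    - A 0 0*A 1 3*A 2 4*A 3 2*A 4 1
    - A 0 0*A 1 4*A 2 1*A 3 2*A 4 3
    + A 0 0*A 1 4*A 2 1*A 3 3*A 4 2
    + A 0 0*A 1 4*A 2 2*A 3 1*A 4 3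
    - A 0 0*A 1 4*A 2 2*A 3 3*A 4 1
    - A 0 0*A 1 4*A 2 3*A 3 1*A 4 2
    + A 0 0*A 1 4*A 2 3*A 3 2*A 4 1
    - A 0 1*A 1 0*A 2 2*A 3 3*A 4 4
    + A 0 1*A 1 0*A 2 2*A 3 4*A 4 3
    + A 0 1*A 1 0*A 2 3*A 3 2*A 4 4
    - A 0 1*A 1 0*A 2 3*A 3 4*A 4 2
    - A 0 1*A 1 0*A 2 4*A 3 2*A 4 3
    + A 0 1*A 1 0*A 2 4*A 3 3*A 4 2
    + A 0 1*A 1 2*A 2 0*A 3 3*A 4 4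
    - A 0 1*A 1 2*A 2 0*A 3 4*A 4 3
    - A 0 1*A 1 2*A 2 3*A 3 0*A 4 4
    + A 0 1*A 1 2*A 2 3*A 3 4*A 4 0
    + A 0 1*A 1 2*A 2 4*A 3 0*A 4 3
    - A 0 1*A 1 2*A 2 4*A 3 3*A 4 0
    - A 0 1*A 1 3*A 2 0*A 3 2*A 4 4
    + A 0 1*A 1 3*A 2 0*A 3 4*A 4 2
    + A 0 1*A 1 3*A 2 2*A 3 0*A 4 4
    - A 0 1*A 1 3*A 2 2*A 3 4*A 4 0
    - A 0 1*A 1 3*A 2 4*A 3 0*A 4 2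
    + A 0 1*A 1 3*A 2 4*A 3 2*A 4 0
    + A 0 1*A 1 4*A 2 0*A 3 2*A 4 3
    - A 0 1*A 1 4*A 2 0*A 3 3*A 4 2
    - A 0 1*A 1 4*A 2 2*A 3 0*A 4 3
    + A 0 1*A 1 4*A 2 2*A 3 3*A 4 0
    + A 0 1*A 1 4*A 2 3*A 3 0*A 4 2
    - A 0 1*A 1 4*A 2 3*A 3 2*A 4 0
    + A 0 2*A 1 0*A 2 1*A 3 3*A 4 4
    - A 0 2*A 1 0*A 2 1*A 3 4*A 4 3
    - A 0 2*A 1 0*A 2 3*A 3 1*A 4 4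
    + A 0 2*A 1 0*A 2 3*A 3 4*A 4 1
    + A 0 2*A 1 0*A 2 4*A 3 1*A 4 3
    - A 0 2*A 1 0*A 2 4*A 3 3*A 4 1
    - A 0 2*A 1 1*A 2 0*A 3 3*A 4 4
    + A 0 2*A 1 1*A 2 0*A 3 4*A 4 3
    + A 0 2*A 1 1*A 2 3*A 3 0*A 4 4
    - A 0 2*A 1 1*A 2 3*A 3 4*A 4 0
    - A 0 2*A 1 1*A 2 4*A 3 0*A 4 3
    + A 0 2*A 1 1*A 2 4*A 3 3*A 4 0
    + A 0 2*A 1 3*A 2 0*A 3 1*A 4 4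
    - A 0 2*A 1 3*A 2 0*A 3 4*A 4 1
    - A 0 2*A 1 3*A 2 1*A 3 0*A 4 4
    + A 0 2*A 1 3*A 2 1*A 3 4*A 4 0
    + A 0 2*A 1 3*A 2 4*A 3 0*A 4 1
    - A 0 2*A 1 3*A 2 4*A 3 1*A 4 0
    - A 0 2*A 1 4*A 2 0*A 3 1*A 4 3
    + A 0 2*A 1 4*A 2 0*A 3 3*A 4 1
    + A 0 2*A 1 4*A 2 1*A 3 0*A 4 3
    - A 0 2*A 1 4*A 2 1*A 3 3*A 4 0
    - A 0 2*A 1 4*A 2 3*A 3 0*A 4 1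
    + A 0 2*A 1 4*A 2 3*A 3 1*A 4 0
    - A 0 3*A 1 0*A 2 1*A 3 2*A 4 4
    + A 0 3*A 1 0*A 2 1*A 3 4*A 4 2
    + A 0 3*A 1 0*A 2 2*A 3 1*A 4 4
    - A 0 3*A 1 0*A 2 2*A 3 4*A 4 1
    - A 0 3*A 1 0*A 2 4*A 3 1*A 4 2
    + A 0 3*A 1 0*A 2 4*A 3 2*A 4 1
    + A 0 3*A 1 1*A 2 0*A 3 2*A 4 4
    - A 0 3*A 1 1*A 2 0*A 3 4*A 4 2
    - A 0 3*A 1 1*A 2 2*A 3 0*A 4 4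
    + A 0 3*A 1 1*A 2 2*A 3 4*A 4 0
    + A 0 3*A 1 1*A 2 4*A 3 0*A 4 2
    - A 0 3*A 1 1*A 2 4*A 3 2*A 4 0
    - A 0 3*A 1 2*A 2 0*A 3 1*A 4 4
    + A 0 3*A 1 2*A 2 0*A 3 4*A 4 1
    + A 0 3*A 1 2*A 2 1*A 3 0*A 4 4
    - A 0 3*A 1 2*A 2 1*A 3 4*A 4 0
    - A 0 3*A 1 2*A 2 4*A 3 0*A 4 1
    + A 0 3*A 1 2*A 2 4*A 3 1*A 4 0
    + A 0 3*A 1 4*A 2 0*A 3 1*A 4 2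
    - A 0 3*A 1 4*A 2 0*A 3 2*A 4 1
    - A 0 3*A 1 4*A 2 1*A 3 0*A 4 2
    + A 0 3*A 1 4*A 2 1*A 3 2*A 4 0
    + A 0 3*A 1 4*A 2 2*A 3 0*A 4 1
    - A 0 3*A 1 4*A 2 2*A 3 1*A 4 0
    + A 0 4*A 1 0*A 2 1*A 3 2*A 4 3
    - A 0 4*A 1 0*A 2 1*A 3 3*A 4 2
    - A 0 4*A 1 0*A 2 2*A 3 1*A 4 3
    + A 0 4*A 1 0*A 2 2*A 3 3*A 4 1
    + A 0 4*A 1 0*A 2 3*A 3 1*A 4 2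
    - A 0 4*A 1 0*A 2 3*A 3 2*A 4 1
    - A 0 4*A 1 1*A 2 0*A 3 2*A 4 3
    + A 0 4*A 1 1*A 2 0*A 3 3*A 4 2
    + A 0 4*A 1 1*A 2 2*A 3 0*A 4 3
    - A 0 4*A 1 1*A 2 2*A 3 3*A 4 0
    - A 0 4*A 1 1*A 2 3*A 3 0*A 4 2
    + A 0 4*A 1 1*A 2 3*A 3 2*A 4 0
    + A 0 4*A 1 2*A 2 0*A 3 1*A 4 3
    - A 0 4*A 1 2*A 2 0*A 3 3*A 4 1
    - A 0 4*A 1 2*A 2 1*A 3 0*A 4 3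
    + A 0 4*A 1 2*A 2 1*A 3 3*A 4 0
    + A 0 4*A 1 2*A 2 3*A 3 0*A 4 1
    - A 0 4*A 1 2*A 2 3*A 3 1*A 4 0
    - A 0 4*A 1 3*A 2 0*A 3 1*A 4 2
    + A 0 4*A 1 3*A 2 0*A 3 2*A 4 1
    + A 0 4*A 1 3*A 2 1*A 3 0*A 4 2
    - A 0 4*A 1 3*A 2 1*A 3 2*A 4 0
    - A 0 4*A 1 3*A 2 2*A 3 0*A 4 1
    + A 0 4*A 1 3*A 2 2*A 3 1*A 4 0)
    := by
  simp only [det_succ_row_zero, ← Nat.not_even_iff_odd, submatrix_apply,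
    submatrix_submatrix, det_unique, Fin.default_eq_zero, Function.comp_apply,
    Fin.sum_univ_succ, Fin.val_zero, Fin.zero_succAbove, Finset.univ_unique, Fin.val_succ,
    Fin.val_eq_zero, Finset.sum_singleton, Even.add_self, Fin.succ_zero_eq_one, Fin.succ_one_eq_two]
  norm_num [Fin.succAbove, Fin.lt_def, Fin.ext_iff]
  norm_num [show ((2:Fin 3).succ : Fin 4) = 3 from rfl, show ((2:Fin 3).castSucc : Fin 4) = 2 from rfl,
    show ((2:Fin 4).succ : Fin 5) = 3 from rfl, show ((3:Fin 4).succ : Fin 5) = 4 from rfl,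
    show ((2:Fin 4).castSucc : Fin 5) = 2 from rfl, show ((3:Fin 4).castSucc : Fin 5) = 3 from rfl]
  ring

noncomputable def fdef (s : ℝ) : ℝ :=
  -2*s + (2*s+4*s^2)*Real.exp (-(2:ℝ)*s) + 16*s^2*Real.exp (-(4:ℝ)*s) + (2*s-36*s^2)*Real.exp (-(6:ℝ)*s)
  + 2*s*Real.exp (-(8:ℝ)*s) + (-4*s+24*s^2)*Real.exp (-(10:ℝ)*s) + (-4*s-24*s^2)*Real.exp (-(14:ℝ)*s)
  + 2*s*Real.exp (-(16:ℝ)*s) + (2*s+36*s^2)*Real.exp (-(18:ℝ)*s) - 16*s^2*Real.exp (-(20:ℝ)*s)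
  + (2*s-4*s^2)*Real.exp (-(22:ℝ)*s) - 2*s*Real.exp (-(24:ℝ)*s)

noncomputable def gdef (s : ℝ) : ℝ :=
  (-8*s^2+8*s^3)*Real.exp (-(2:ℝ)*s) + 8*s^2*Real.exp (-(4:ℝ)*s) + (8*s^2+24*s^3)*Real.exp (-(6:ℝ)*s)
  - 64*s^3*Real.exp (-(8:ℝ)*s) + (-8*s^2+24*s^3)*Real.exp (-(10:ℝ)*s) - 8*s^2*Real.exp (-(12:ℝ)*s)
  + (8*s^2+8*s^3)*Real.exp (-(14:ℝ)*s)

lemma expk (k : ℕ) (x : ℝ) : Real.exp (-(k:ℝ)*x) = Real.exp (-x) ^ k := by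
  rw [← Real.exp_nat_mul]; ring_nf

set_option maxHeartbeats 4000000 in
lemma det_eq (h ε : ℝ) : (hfd6Matrix h ε).det * h^2 = fdef (ε^2*h^2) := by
  have A4 : Real.exp (-(4 * ε ^ 2 * h ^ 2)) = Real.exp (-(ε^2*h^2))^4 := by
    rw [← expk 4]; push_cast; ring_nf
  have A9 : Real.exp (-(9 * ε ^ 2 * h ^ 2)) = Real.exp (-(ε^2*h^2))^9 := by
    rw [← expk 9]; push_cast; ring_nf
  have A16 : Real.exp (-(16 * ε ^ 2 * h ^ 2)) = Real.exp (-(ε^2*h^2))^16 := by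
    rw [← expk 16]; push_cast; ring_nf
  have B2 : Real.exp (-(2 * (ε ^ 2 * h ^ 2))) = Real.exp (-(ε^2*h^2))^2 := by
    rw [← expk 2]; push_cast; ring_nf
  have B4 : Real.exp (-(4 * (ε ^ 2 * h ^ 2))) = Real.exp (-(ε^2*h^2))^4 := by
    rw [← expk 4]; push_cast; ring_nf
  have B6 : Real.exp (-(6 * (ε ^ 2 * h ^ 2))) = Real.exp (-(ε^2*h^2))^6 := by
    rw [← expk 6]; push_cast; ring_nf
  have B8 : Real.exp (-(8 * (ε ^ 2 * h ^ 2))) = Real.exp (-(ε^2*h^2))^8 := by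
    rw [← expk 8]; push_cast; ring_nf
  have B10 : Real.exp (-(10 * (ε ^ 2 * h ^ 2))) = Real.exp (-(ε^2*h^2))^10 := by
    rw [← expk 10]; push_cast; ring_nf
  have B14 : Real.exp (-(14 * (ε ^ 2 * h ^ 2))) = Real.exp (-(ε^2*h^2))^14 := by
    rw [← expk 14]; push_cast; ring_nf
  have B16 : Real.exp (-(16 * (ε ^ 2 * h ^ 2))) = Real.exp (-(ε^2*h^2))^16 := by
    rw [← expk 16]; push_cast; ring_nf
  have B18 : Real.exp (-(18 * (ε ^ 2 * h ^ 2))) = Real.exp (-(ε^2*h^2))^18 := by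
    rw [← expk 18]; push_cast; ring_nf
  have B20 : Real.exp (-(20 * (ε ^ 2 * h ^ 2))) = Real.exp (-(ε^2*h^2))^20 := by
    rw [← expk 20]; push_cast; ring_nf
  have B22 : Real.exp (-(22 * (ε ^ 2 * h ^ 2))) = Real.exp (-(ε^2*h^2))^22 := by
    rw [← expk 22]; push_cast; ring_nf
  have B24 : Real.exp (-(24 * (ε ^ 2 * h ^ 2))) = Real.exp (-(ε^2*h^2))^24 := by
    rw [← expk 24]; push_cast; ring_nf
  rw [det_fin_five, fdef]
  simp [hfd6Matrix, Matrix.cons_val_succ, Matrix.vecHead, Matrix.vecTail, Function.comp]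
  rw [A4, A9, A16, B2, B4, B6, B8, B10, B14, B16, B18, B20, B22, B24]
  ring

set_option maxHeartbeats 4000000 in
lemma num_eq (h ε : ℝ) :
    ((hfd6Matrix h ε).updateCol 0 (hfd6Rhs h ε)).det * h^3 = gdef (ε^2*h^2) := by
  have A4 : Real.exp (-(4 * ε ^ 2 * h ^ 2)) = Real.exp (-(ε^2*h^2))^4 := by
    rw [← expk 4]; push_cast; ring_nf
  have A9 : Real.exp (-(9 * ε ^ 2 * h ^ 2)) = Real.exp (-(ε^2*h^2))^9 := by
    rw [← expk 9]; push_cast; ring_nf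
  have A16 : Real.exp (-(16 * ε ^ 2 * h ^ 2)) = Real.exp (-(ε^2*h^2))^16 := by
    rw [← expk 16]; push_cast; ring_nf
  have B2 : Real.exp (-(2 * (ε ^ 2 * h ^ 2))) = Real.exp (-(ε^2*h^2))^2 := by
    rw [← expk 2]; push_cast; ring_nf
  have B4 : Real.exp (-(4 * (ε ^ 2 * h ^ 2))) = Real.exp (-(ε^2*h^2))^4 := by
    rw [← expk 4]; push_cast; ring_nf
  have B6 : Real.exp (-(6 * (ε ^ 2 * h ^ 2))) = Real.exp (-(ε^2*h^2))^6 := by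
    rw [← expk 6]; push_cast; ring_nf
  have B8 : Real.exp (-(8 * (ε ^ 2 * h ^ 2))) = Real.exp (-(ε^2*h^2))^8 := by
    rw [← expk 8]; push_cast; ring_nf
  have B10 : Real.exp (-(10 * (ε ^ 2 * h ^ 2))) = Real.exp (-(ε^2*h^2))^10 := by
    rw [← expk 10]; push_cast; ring_nf
  have B12 : Real.exp (-(12 * (ε ^ 2 * h ^ 2))) = Real.exp (-(ε^2*h^2))^12 := by
    rw [← expk 12]; push_cast; ring_nf
  have B14 : Real.exp (-(14 * (ε ^ 2 * h ^ 2))) = Real.exp (-(ε^2*h^2))^14 := by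
    rw [← expk 14]; push_cast; ring_nf
  have B16 : Real.exp (-(16 * (ε ^ 2 * h ^ 2))) = Real.exp (-(ε^2*h^2))^16 := by
    rw [← expk 16]; push_cast; ring_nf
  have B18 : Real.exp (-(18 * (ε ^ 2 * h ^ 2))) = Real.exp (-(ε^2*h^2))^18 := by
    rw [← expk 18]; push_cast; ring_nf
  have B20 : Real.exp (-(20 * (ε ^ 2 * h ^ 2))) = Real.exp (-(ε^2*h^2))^20 := by
    rw [← expk 20]; push_cast; ring_nf
  have B22 : Real.exp (-(22 * (ε ^ 2 * h ^ 2))) = Real.exp (-(ε^2*h^2))^22 := by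
    rw [← expk 22]; push_cast; ring_nf
  have B24 : Real.exp (-(24 * (ε ^ 2 * h ^ 2))) = Real.exp (-(ε^2*h^2))^24 := by
    rw [← expk 24]; push_cast; ring_nf
  rw [det_fin_five, gdef]
  simp [hfd6Matrix, hfd6Rhs, Matrix.updateCol_apply, Matrix.cons_val_succ, Matrix.vecHead,
    Matrix.vecTail, Function.comp]
  simp only [A4, A9, A16, B2, B4, B6, B8, B10, B12, B14]
  ring

noncomputable def Texp (x : ℝ) : ℝ := ∑ i ∈ Finset.range 11, x^i / (Nat.factorial i)

lemma texp_bound {x : ℝ} (hx : |x| ≤ 1) :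
    |Real.exp x - Texp x| ≤ |x|^11 * (12 / (Nat.factorial 11 * 11)) := by
  have := Real.exp_bound hx (n := 11) (by norm_num)
  simpa [Texp] using this

lemma term0 (a b c m : ℝ) (hm0 : 0 ≤ m) (hm : m ≤ 24) (k : ℕ) (hk : k ≤ 9) :
    Tendsto (fun s : ℝ => (a + b*s + c*s^2) * (Real.exp (-m*s) - Texp (-m*s)) / s^k)
      (𝓝[>] 0) (𝓝 0) := by
  have C0 : (0:ℝ) < 12 / (Nat.factorial 11 * 11) := by positivity
  apply squeeze_zero_norm'
    (a := fun s => (|a|+|b|+|c|) * 24^11 * (12 / (Nat.factorial 11 * 11)) * s^2)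
  · filter_upwards [Ioc_mem_nhdsGT (by norm_num : (0:ℝ) < 1/24)] with s hs
    obtain ⟨hs0, hs24⟩ := hs
    have hs1 : s ≤ 1 := by linarith
    have hxabs : |(-m*s)| ≤ 1 := by
      rw [abs_of_nonpos (by nlinarith)]; nlinarith
    have hb := texp_bound hxabs
    have h1 : |a + b*s + c*s^2| ≤ |a|+|b|+|c| := by
      calc |a + b*s + c*s^2| ≤ |a| + |b*s| + |c*s^2| := abs_add_three _ _ _
        _ ≤ |a| + |b| + |c| := by
            rw [abs_mul, abs_mul]
            have : |s| ≤ 1 := by rw [abs_of_pos hs0]; exact hs1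
            have h2 : |s^2| ≤ 1 := by rw [abs_pow]; exact pow_le_one₀ (abs_nonneg s) this
            nlinarith [abs_nonneg a, abs_nonneg b, abs_nonneg c, abs_nonneg (s^2)]
    have hxp : |(-m*s)|^11 ≤ (24*s)^11 := by
      apply pow_le_pow_left₀ (abs_nonneg _)
      rw [abs_of_nonpos (by nlinarith)]; nlinarith
    rw [Real.norm_eq_abs, abs_div, abs_mul, abs_pow, abs_of_pos hs0]
    rw [div_le_iff₀ (by positivity)]
    calc |a + b*s + c*s^2| * |Real.exp (-m*s) - Texp (-m*s)|
        ≤ (|a|+|b|+|c|) * ((24*s)^11 * (12 / (Nat.factorial 11 * 11))) := by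
          apply mul_le_mul h1 (hb.trans (by gcongr)) (abs_nonneg _) (by positivity)
      _ = (|a|+|b|+|c|) * 24^11 * (12 / (Nat.factorial 11 * 11)) * s^11 := by ring
      _ ≤ (|a|+|b|+|c|) * 24^11 * (12 / (Nat.factorial 11 * 11)) * (s^2 * s^k) := by
          have h3 : s^11 ≤ s^2 * s^k := by
            rw [← pow_add]
            exact pow_le_pow_of_le_one hs0.le hs1 (by omega)
          have h4 : (0:ℝ) ≤ (|a|+|b|+|c|) * 24^11 * (12 / (Nat.factorial 11 * 11)) := by positivity
          exact mul_le_mul_of_nonneg_left h3 h4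
      _ = (|a|+|b|+|c|) * 24^11 * (12 / (Nat.factorial 11 * 11)) * s^2 * s^k := by ring
  · have : Tendsto (fun s : ℝ => (|a|+|b|+|c|) * 24^11 * (12 / (Nat.factorial 11 * 11)) * s^2)
        (𝓝 0) (𝓝 0) := by
      have hc : Continuous (fun s : ℝ => (|a|+|b|+|c|) * 24^11 * (12 / (Nat.factorial 11 * 11)) * s^2) := by
        continuity
      have := hc.tendsto 0
      simpa using this
    exact this.mono_left nhdsWithin_le_nhds

noncomputable def psi (s : ℝ) : ℝ := -36864/5 + 442368/5*s - 19464192/35*s^2 - 4289558528/105*s^3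

noncomputable def rho (s : ℝ) : ℝ := 294912/7 - 4596267008/105*s - 24279749632/175*s^2

set_option maxHeartbeats 2000000 in
lemma fid (s : ℝ) (hs : s ≠ 0) : fdef s / s^9 =
    psi s + ((2 + 4*s + 0*s^2) * (Real.exp (-2*s) - Texp (-2*s)) / s^8 + ((0 + 16*s + 0*s^2) * (Real.exp (-4*s) - Texp (-4*s)) / s^8 + ((2 + -36*s + 0*s^2) * (Real.exp (-6*s) - Texp (-6*s)) / s^8 + ((2 + 0*s + 0*s^2) * (Real.exp (-8*s) - Texp (-8*s)) / s^8 + ((-4 + 24*s + 0*s^2) * (Real.exp (-10*s) - Texp (-10*s)) / s^8 + ((-4 + -24*s + 0*s^2) * (Real.exp (-14*s) - Texp (-14*s)) / s^8 + ((2 + 0*s + 0*s^2) * (Real.exp (-16*s) - Texp (-16*s)) / s^8 + ((2 + 36*s + 0*s^2) * (Real.exp (-18*s) - Texp (-18*s)) / s^8 + ((0 + -16*s + 0*s^2) * (Real.exp (-20*s) - Texp (-20*s)) / s^8 + ((2 + -4*s + 0*s^2) * (Real.exp (-22*s) - Texp (-22*s)) / s^8 + ((-2 + 0*s + 0*s^2)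 * (Real.exp (-24*s) - Texp (-24*s)) / s^8))))))))))) := by
  have key : fdef s = s^9 * psi s + (s*(2 + 4*s + 0*s^2) * (Real.exp (-2*s) - Texp (-2*s)) + (s*(0 + 16*s + 0*s^2) * (Real.exp (-4*s) - Texp (-4*s)) + (s*(2 + -36*s + 0*s^2) * (Real.exp (-6*s) - Texp (-6*s)) + (s*(2 + 0*s + 0*s^2) * (Real.exp (-8*s) - Texp (-8*s)) + (s*(-4 + 24*s + 0*s^2) * (Real.exp (-10*s) - Texp (-10*s)) + (s*(-4 + -24*s + 0*s^2) * (Real.exp (-14*s) - Texp (-14*s)) + (s*(2 + 0*s + 0*s^2) * (Real.exp (-16*s) - Texp (-16*s)) + (s*(2 + 36*s + 0*s^2) * (Real.exp (-18*s) - Texp (-18*s)) + (s*(0 + -16*s + 0*s^2) * (Real.exp (-20*s) - Texp (-20*s)) + (s*(2 + -4*s + 0*s^2) * (Real.exp (-22*s) - Texp (-22*s)) + (s*(-2 + 0*s + 0*s^2) * (Real.exp (-24*s) - Texp (-24*s))))))))))))) := by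
    simp only [fdef, psi, Texp, Finset.sum_range_succ, Finset.sum_range_zero, Nat.factorial]
    push_cast
    ring
  rw [key]
  field_simp

set_option maxHeartbeats 2000000 in
lemma uid (s : ℝ) (hs : s ≠ 0) : (36*gdef s + (1+4*s)*fdef s) / s^10 =
    s * rho s + ((2 + -276*s + 304*s^2) * (Real.exp (-2*s) - Texp (-2*s)) / s^9 + ((0 + 304*s + 64*s^2) * (Real.exp (-4*s) - Texp (-4*s)) / s^9 + ((2 + 260*s + 720*s^2) * (Real.exp (-6*s) - Texp (-6*s)) / s^9 + ((2 + 8*s + -2304*s^2) * (Real.exp (-8*s) - Texp (-8*s)) / s^9 + ((-4 + -280*s + 960*s^2) * (Real.exp (-10*s) - Texp (-10*s)) / s^9 + ((0 + -288*s + 0*s^2) * (Real.exp (-12*s) - Texp (-12*s)) / s^9 + ((-4 + 248*s + 192*s^2) * (Real.exp (-14*s) - Texp (-14*s)) / s^9 + ((2 + 8*s + 0*s^2) * (Real.exp (-16*s) - Texp (-16*s)) / s^9 + ((2 + 44*s + 144*s^2) * (Real.exp (-18*s) - Texp (-18*s)) / s^9 + ((0 + -16*s + -64*s^2) * (Real.exp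 (-20*s) - Texp (-20*s)) / s^9 + ((2 + 4*s + -16*s^2) * (Real.exp (-22*s) - Texp (-22*s)) / s^9 + ((-2 + -8*s + 0*s^2) * (Real.exp (-24*s) - Texp (-24*s)) / s^9)))))))))))) := by
  have key : 36*gdef s + (1+4*s)*fdef s = s^10 * (s * rho s) + (s*(2 + -276*s + 304*s^2) * (Real.exp (-2*s) - Texp (-2*s)) + (s*(0 + 304*s + 64*s^2) * (Real.exp (-4*s) - Texp (-4*s)) + (s*(2 + 260*s + 720*s^2) * (Real.exp (-6*s) - Texp (-6*s)) + (s*(2 + 8*s + -2304*s^2) * (Real.exp (-8*s) - Texp (-8*s)) + (s*(-4 + -280*s + 960*s^2) * (Real.exp (-10*s) - Texp (-10*s)) + (s*(0 + -288*s + 0*s^2) * (Real.exp (-12*s) - Texp (-12*s)) + (s*(-4 + 248*s + 192*s^2) * (Real.exp (-14*s) - Texp (-14*s)) + (s*(2 + 8*s + 0*s^2) * (Real.exp (-16*s) - Texp (-16*s)) + (s*(2 + 44*s + 144*s^2) * (Real.exp (-18*s) - Texp (-18*s)) + (s*(0 + -16*s + -64*s^2) * (Real.exp (-20*s) - Texp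 (-20*s)) + (s*(2 + 4*s + -16*s^2) * (Real.exp (-22*s) - Texp (-22*s)) + (s*(-2 + -8*s + 0*s^2) * (Real.exp (-24*s) - Texp (-24*s)))))))))))))) := by
    simp only [fdef, gdef, rho, Texp, Finset.sum_range_succ, Finset.sum_range_zero, Nat.factorial]
    push_cast
    ring
  rw [key]
  field_simp

lemma flim : Tendsto (fun s : ℝ => fdef s / s^9) (𝓝[>] 0) (𝓝 (-36864/5)) := by
  have hpsi : Tendsto (fun s : ℝ => psi s) (𝓝[>] (0:ℝ)) (𝓝 (psi 0)) := by
    have hc : Continuous psi := by unfold psi; continuity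
    exact (hc.tendsto 0).mono_left nhdsWithin_le_nhds
  have hsum := (term0 (2) (4) 0 2 (by norm_num) (by norm_num) 8 (by norm_num)).add ((term0 (0) (16) 0 4 (by norm_num) (by norm_num) 8 (by norm_num)).add ((term0 (2) (-36) 0 6 (by norm_num) (by norm_num) 8 (by norm_num)).add ((term0 (2) (0) 0 8 (by norm_num) (by norm_num) 8 (by norm_num)).add ((term0 (-4) (24) 0 10 (by norm_num) (by norm_num) 8 (by norm_num)).add ((term0 (-4) (-24) 0 14 (by norm_num) (by norm_num) 8 (by norm_num)).add ((term0 (2) (0) 0 16 (by norm_num) (by norm_num) 8 (by norm_num)).add ((term0 (2) (36) 0 18 (by norm_num) (by norm_num) 8 (by norm_num)).add ((term0 (0) (-16) 0 20 (by norm_num) (by norm_num) 8 (by norm_num)).add ((term0 (2) (-4) 0 22 (by norm_num) (by norm_num) 8 (by norm_num)).add ((term0 (-2) (0) 0 24 (by norm_num) (by norm_num) 8 (by norm_num))))))))))))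
  have htot := hpsi.add hsum
  have htot2 : Tendsto (fun s : ℝ => psi s + ((2 + 4*s + 0*s^2) * (Real.exp (-2*s) - Texp (-2*s)) / s^8 + ((0 + 16*s + 0*s^2) * (Real.exp (-4*s) - Texp (-4*s)) / s^8 + ((2 + -36*s + 0*s^2) * (Real.exp (-6*s) - Texp (-6*s)) / s^8 + ((2 + 0*s + 0*s^2) * (Real.exp (-8*s) - Texp (-8*s)) / s^8 + ((-4 + 24*s + 0*s^2) * (Real.exp (-10*s) - Texp (-10*s)) / s^8 + ((-4 + -24*s + 0*s^2) * (Real.exp (-14*s) - Texp (-14*s)) / s^8 + ((2 + 0*s + 0*s^2) * (Real.exp (-16*s) - Texp (-16*s)) / s^8 + ((2 + 36*s + 0*s^2) * (Real.exp (-18*s) - Texp (-18*s)) / s^8 + ((0 + -16*s + 0*s^2) * (Real.exp (-20*s) - Texp (-20*s)) / s^8 + ((2 + -4*s + 0*s^2) * (Real.exp (-22*s) - Texp (-22*s)) / s^8 + ((-2 + 0*s + 0*s^2) * (Real.exp (-24*s) - Texp (-24*s)) / s^8)))))))))))) (𝓝[>] (0:ℝ)) (𝓝 (-36864/5)) :=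 by
    convert htot using 2
    norm_num [psi]
  apply htot2.congr'
  filter_upwards [self_mem_nhdsWithin] with s hs
  exact (fid s (ne_of_gt hs)).symm

lemma ulim : Tendsto (fun s : ℝ => (36*gdef s + (1+4*s)*fdef s) / s^10) (𝓝[>] 0) (𝓝 0) := by
  have hrho : Tendsto (fun s : ℝ => s * rho s) (𝓝[>] (0:ℝ)) (𝓝 0) := by
    have hc : Continuous (fun s : ℝ => s * rho s) := by unfold rho; continuity
    simpa using (hc.tendsto 0).mono_left (nhdsWithin_le_nhds : 𝓝[>] (0:ℝ) ≤ 𝓝 0)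
  have hsum := (term0 (2) (-276) (304) 2 (by norm_num) (by norm_num) 9 (by norm_num)).add ((term0 (0) (304) (64) 4 (by norm_num) (by norm_num) 9 (by norm_num)).add ((term0 (2) (260) (720) 6 (by norm_num) (by norm_num) 9 (by norm_num)).add ((term0 (2) (8) (-2304) 8 (by norm_num) (by norm_num) 9 (by norm_num)).add ((term0 (-4) (-280) (960) 10 (by norm_num) (by norm_num) 9 (by norm_num)).add ((term0 (0) (-288) (0) 12 (by norm_num) (by norm_num) 9 (by norm_num)).add ((term0 (-4) (248) (192) 14 (by norm_num) (by norm_num) 9 (by norm_num)).add ((term0 (2) (8) (0) 16 (by norm_num) (by norm_num) 9 (by norm_num)).add ((term0 (2) (44) (144) 18 (by norm_num) (by norm_num) 9 (by norm_num)).add ((term0 (0) (-16) (-64) 20 (by norm_num) (by norm_num) 9 (by norm_num)).add ((term0 (2) (4) (-16) 22 (by norm_num) (by norm_num) 9 (by norm_num)).add ((term0 (-2) (-8) (0) 24 (by norm_num) (by norm_num) 9 (by norm_num)))))))))))))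
  have htot := hrho.add hsum
  have htot2 : Tendsto (fun s : ℝ => s * rho s + ((2 + -276*s + 304*s^2) * (Real.exp (-2*s) - Texp (-2*s)) / s^9 + ((0 + 304*s + 64*s^2) * (Real.exp (-4*s) - Texp (-4*s)) / s^9 + ((2 + 260*s + 720*s^2) * (Real.exp (-6*s) - Texp (-6*s)) / s^9 + ((2 + 8*s + -2304*s^2) * (Real.exp (-8*s) - Texp (-8*s)) / s^9 + ((-4 + -280*s + 960*s^2) * (Real.exp (-10*s) - Texp (-10*s)) / s^9 + ((0 + -288*s + 0*s^2) * (Real.exp (-12*s) - Texp (-12*s)) / s^9 + ((-4 + 248*s + 192*s^2) * (Real.exp (-14*s) - Texp (-14*s)) / s^9 + ((2 + 8*s + 0*s^2) * (Real.exp (-16*s) - Texp (-16*s)) / s^9 + ((2 + 44*s + 144*s^2) * (Real.exp (-18*s) - Texp (-18*s)) / s^9 + ((0 + -16*s + -64*s^2) * (Real.exp (-20*s) - Texp (-20*s)) / s^9 + ((2 + 4*s + -16*s^2) * (Real.exp (-22*s) - Texp (-22*s)) / s^9 + ((-2 + -8*s + 0*s^2) * (Real.exp (-24*s) - Texp (-24*s))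 / s^9))))))))))))) (𝓝[>] (0:ℝ)) (𝓝 0) := by
    convert htot using 2
    norm_num
  apply htot2.congr'
  filter_upwards [self_mem_nhdsWithin] with s hs
  exact (uid s (ne_of_gt hs)).symm


/-- Taylor expansion at order ε² of the weight α₋₂ of the sixth-order
Gaussian RBF-HFD formula: `(α₋₂(ε) + 1/(36h))/ε² → −h/9` as ε → 0⁺. -/
theorem gaussian_rbf_hfd6_alpha2_expansion (h : ℝ) (hh : 0 < h)
    (w : ℝ → Fin 5 → ℝ)
    (hinv : ∀ᶠ ε in 𝓝[>] (0 : ℝ), IsUnit (hfd6Matrix h ε))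
    (hw : ∀ᶠ ε in 𝓝[>] (0 : ℝ), hfd6Matrix h ε *ᵥ w ε = hfd6Rhs h ε) :
    Tendsto (fun ε : ℝ => (w ε 0 + 1 / (36 * h)) / ε ^ 2)
      (𝓝[>] 0) (𝓝 (-h / 9)) := by
  have hh' : h ≠ 0 := ne_of_gt hh
  have hs : Tendsto (fun ε : ℝ => ε^2*h^2) (𝓝[>] (0:ℝ)) (𝓝[>] (0:ℝ)) := by
    apply tendsto_nhdsWithin_of_tendsto_nhds_of_eventually_within
    · have hc : Continuous (fun ε : ℝ => ε^2*h^2) := by continuity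
      simpa using (hc.tendsto 0).mono_left (nhdsWithin_le_nhds : 𝓝[>] (0:ℝ) ≤ 𝓝 0)
    · filter_upwards [self_mem_nhdsWithin] with ε hε
      exact mul_pos (pow_pos hε 2) (pow_pos hh 2)
  have hF := flim.comp hs
  have hU := ulim.comp hs
  have hden : (-36864/5 : ℝ) ≠ 0 := by norm_num
  have hmain : Tendsto (fun ε : ℝ => -h/9 + (h/36) *
      (((36*gdef (ε^2*h^2) + (1+4*(ε^2*h^2))*fdef (ε^2*h^2)) / (ε^2*h^2)^10) /
        (fdef (ε^2*h^2) / (ε^2*h^2)^9))) (𝓝[>] (0:ℝ)) (𝓝 (-h/9)) := by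
    have := (tendsto_const_nhds (x := -h/9) (f := 𝓝[>] (0:ℝ))).add
      ((tendsto_const_nhds (x := h/36) (f := 𝓝[>] (0:ℝ))).mul (hU.div hF hden))
    simpa using this
  refine Tendsto.congr' ?_ hmain
  filter_upwards [hinv, hw, self_mem_nhdsWithin] with ε hinvε hwε hε
  have hdet : (hfd6Matrix h ε).det ≠ 0 :=
    ((Matrix.isUnit_iff_isUnit_det _).mp hinvε).ne_zero
  have hcr : (hfd6Matrix h ε).det * w ε 0
      = ((hfd6Matrix h ε).updateCol 0 (hfd6Rhs h ε)).det := by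
    have h1 : Matrix.cramer (hfd6Matrix h ε) (hfd6Rhs h ε) = (hfd6Matrix h ε).det • w ε := by
      rw [← hwε, Matrix.cramer_eq_adjugate_mulVec, Matrix.mulVec_mulVec,
        Matrix.adjugate_mul, Matrix.smul_mulVec, Matrix.one_mulVec]
    have h2 := congrFun h1 0
    rw [Matrix.cramer_apply] at h2
    rw [h2]; simp
  have hfs : fdef (ε^2*h^2) ≠ 0 := by
    intro h0
    apply hdet
    have := det_eq h ε
    rw [h0] at this
    have h2 : (h:ℝ)^2 ≠ 0 := by positivity
    exact (mul_eq_zero.mp this).resolve_right h2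
  have hw0 : w ε 0 = gdef (ε^2*h^2) / (h * fdef (ε^2*h^2)) := by
    have e1 := det_eq h ε
    have e2 := num_eq h ε
    rw [eq_div_iff (by exact mul_ne_zero hh' hfs)]
    -- det * w0 = upd.det ; multiply by h^3
    have h3 : (hfd6Matrix h ε).det * w ε 0 * h^3
        = ((hfd6Matrix h ε).updateCol 0 (hfd6Rhs h ε)).det * h^3 := by rw [hcr]
    rw [e2] at h3
    calc w ε 0 * (h * fdef (ε^2*h^2)) = (hfd6Matrix h ε).det * w ε 0 * h^3 := by
          rw [← e1]; ring
      _ = gdef (ε^2*h^2) := h3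
  have hε' : (ε:ℝ) ≠ 0 := ne_of_gt hε
  have hsne : (ε^2*h^2 : ℝ) ≠ 0 := by positivity
  rw [hw0]
  have hfs' : fdef (h^2*ε^2) ≠ 0 := by rwa [mul_comm]
  field_simp
  ring
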